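/- arXiv:0811.0940 — 3 statements merged into one kernel-verified Lean document; each statement's English description precedes it below -/
import Mathlib

section
/- Let V be a finite-dimensional complex vector space, q a nondegenerate quadratic form on V with associated symmetric bilinear form B, and ω an alternating bilinear form on V. Suppose that ω(u,v) = 0 whenever u ∈ V satisfies q(u) = 0 and v ∈ V satisfies B(u,v) = 0 (i.e., v tangent to the quadric cone at the smooth point u). If dim V ≥ 3, then ω = 0. -/
/-- If an alternating bilinear form `ω` vanishes on every pair `(u,v)` with `u` on the zero cone
of a nondegenerate quadratic form `q` and `v` tangent to the cone at `u`, and `dim V ≥ 3`,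
then `ω = 0`. -/
theorem alt_form_vanishing_on_quadric_tangents_is_zero (V : Type*) [AddCommGroup V]
    [Module ℂ V] [FiniteDimensional ℂ V] (hdim : 3 ≤ Module.finrank ℂ V)
    (q : QuadraticForm ℂ V)
    (hnd : ∀ u : V, (∀ v : V, QuadraticMap.polar q u v = 0) → u = 0)
    (ω : V →ₗ[ℂ] V →ₗ[ℂ] ℂ) (halt : ∀ v : V, ω v v = 0)
    (hvan : ∀ u v : V, q u = 0 → QuadraticMap.polar q u v = 0 → ω u v = 0) :
    ω = 0 := by
  classical
  haveI : Invertible (2 : ℂ) := invertibleOfNonzero two_ne_zero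
  have hsymm : (QuadraticMap.polarBilin q).IsSymm := by
    constructor
    intro x y
    simp [QuadraticMap.polar_comm q x y]
  obtain ⟨e, he⟩ := LinearMap.BilinForm.exists_orthogonal_basis hsymm
  have horth : ∀ i j, i ≠ j → QuadraticMap.polar (⇑q) (e i) (e j) = 0 := fun i j h => he h
  -- each basis vector is non-isotropic
  have hq : ∀ i, q (e i) ≠ 0 := by
    intro i hi
    have h0 : ∀ w, QuadraticMap.polar q (e i) w = 0 := by
      intro w
      have : (QuadraticMap.polarBilin q) (e i) = 0 := by
        apply e.ext
        intro j
        by_cases hij : i = j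
        · subst hij
          have hself := QuadraticMap.polar_self q (e i)
          simp only [LinearMap.zero_apply, QuadraticMap.polarBilin_apply_apply, hself, hi]
          simp
        · simpa using horth i j hij
      simpa using congrArg (fun f => f w) this
    exact e.ne_zero i (hnd _ h0)
  -- key: ω vanishes on distinct basis vectors
  have key : ∀ j k l : Fin (Module.finrank ℂ V), j ≠ k → l ≠ j → l ≠ k →
      ω (e j) (e l) = 0 ∧ ω (e k) (e l) = 0 := by
    intro j k l hjk hlj hlk
    obtain ⟨t, ht⟩ := IsAlgClosed.exists_pow_nat_eq (-(q (e j)) / q (e k)) (n := 2) (by norm_num)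
    have ht2 : t ^ 2 * q (e k) = -(q (e j)) := by
      rw [ht, div_mul_cancel₀ _ (hq k)]
    have htne : t ≠ 0 := by
      intro h0
      rw [h0] at ht2
      simp at ht2
      exact hq j ht2
    have ortho : ∀ (s : ℂ), QuadraticMap.polar q (e j) (s • e k) = 0 := by
      intro s
      rw [QuadraticMap.polar_smul_right, horth j k hjk, smul_zero]
    have main : ∀ s : ℂ, s ^ 2 * q (e k) = -(q (e j)) →
        ω (e j) (e l) + s * ω (e k) (e l) = 0 := by
      intro s hs
      have hiso : q (e j + s • e k) = 0 := by
        rw [QuadraticMap.map_add (⇑q) (e j) (s • e k), ortho, QuadraticMap.map_smul]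
        have h2 : s * s = s ^ 2 := (sq s).symm
        simp only [smul_eq_mul, h2]
        rw [hs]; ring
      have htan : QuadraticMap.polar q (e j + s • e k) (e l) = 0 := by
        rw [QuadraticMap.polar_add_left, QuadraticMap.polar_smul_left,
          horth j l hlj.symm, horth k l hlk.symm, smul_zero, add_zero]
      have := hvan _ (e l) hiso htan
      simpa [smul_eq_mul] using this
    have h1 := main t ht2
    have h2 := main (-t) (by rw [neg_pow]; simpa using ht2)
    constructor
    · have := add_eq_zero_iff_eq_neg.mp h1
      -- combine h1 and h2
      have hsum : (2 : ℂ) * ω (e j) (e l) = 0 := by linear_combination h1 + h2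
      have := mul_eq_zero.mp hsum
      rcases this with h | h
      · norm_num at h
      · exact h
    · have hdiff : (2 * t) * ω (e k) (e l) = 0 := by linear_combination h1 - h2
      rcases mul_eq_zero.mp hdiff with h | h
      · rcases mul_eq_zero.mp h with h' | h'
        · norm_num at h'
        · exact absurd h' htne
      · exact h
  -- all off-diagonal entries vanish
  have hall : ∀ j l, ω (e j) (e l) = 0 := by
    intro j l
    by_cases hjl : j = l
    · subst hjl; exact halt _
    · -- find a third index
      have : ∃ k, k ≠ j ∧ k ≠ l := by
        by_contra h
        push_neg at h
        have hsub : (Finset.univ : Finset (Fin (Module.finrank ℂ V))) ⊆ {j, l} := by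
          intro k _
          rcases h k with h1
          by_cases hk : k = j
          · simp [hk]
          · simp [h1 hk]
        have := Finset.card_le_card hsub
        simp only [Finset.card_univ, Fintype.card_fin] at this
        have h2 : ({j, l} : Finset _).card ≤ 2 := by
          apply le_trans (Finset.card_insert_le _ _)
          simp
        omega
      obtain ⟨k, hkj, hkl⟩ := this
      exact (key j k l (fun h => hkj h.symm) (Ne.symm hjl) (Ne.symm hkl)).1
  apply e.ext
  intro j
  apply e.ext
  intro l
  simpa using hall j l
end

section
/- Let V be a finite-dimensional complex vector space, and let C ⊆ V be an irreducible algebraic cone of codimension 1 in V that is not a linear subspace. Define Ĉ ⊆ Λ²V to be the set of elements u ∧ v where u is a smooth point of C and v is tangent to C at u. Then Ĉ spans Λ²V; equivalently, the only element φ ∈ Λ²V* vanishing on all of Ĉ is φ = 0. -/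
open MvPolynomial

namespace HatCone

variable {n : ℕ}

lemma degree_fin (m : Fin n →₀ ℕ) : m.degree = ∑ i, m i := by
  rw [Finsupp.degree]
  exact Finset.sum_subset (Finset.subset_univ _)
    (fun i _ hi => Finsupp.notMem_support_iff.mp hi)

lemma pderiv_comm (i j : Fin n) (f : MvPolynomial (Fin n) ℂ) :
    pderiv i (pderiv j f) = pderiv j (pderiv i f) := by
  induction f using MvPolynomial.induction_on' with
  | monomial s a =>
    by_cases hij : i = j
    · subst hij; rfl
    · simp only [pderiv_monomial]
      have h1 : s - Finsupp.single j 1 - Finsupp.single i 1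
          = s - Finsupp.single i 1 - Finsupp.single j 1 := by
        ext k
        simp only [Finsupp.tsub_apply, Finsupp.single_apply]
        omega
      have h2 : (s - Finsupp.single j 1 : Fin n →₀ ℕ) i = s i := by
        simp [Finsupp.tsub_apply, Finsupp.single_apply, Ne.symm hij]
      have h3 : (s - Finsupp.single i 1 : Fin n →₀ ℕ) j = s j := by
        simp [Finsupp.tsub_apply, Finsupp.single_apply, hij]
      rw [h1, h2, h3]
      congr 1
      ring
  | add f g hf hg => simp [map_add, hf, hg]


lemma coeff_degree {p : MvPolynomial (Fin n) ℂ} {d : ℕ} (hp : p.IsHomogeneous d)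
    {m : Fin n →₀ ℕ} (hm : coeff m p ≠ 0) : m.degree = d := by
  by_contra h
  exact hm (hp.coeff_eq_zero h)

lemma pderiv_homog {p : MvPolynomial (Fin n) ℂ} {d : ℕ} (hp : p.IsHomogeneous d)
    (hd : 1 ≤ d) (i : Fin n) : (pderiv i p).IsHomogeneous (d - 1) := by
  conv_lhs => rw [p.as_sum]
  rw [map_sum]
  apply MvPolynomial.IsHomogeneous.sum
  intro m hm
  rw [pderiv_monomial]
  by_cases h0 : m i = 0
  · simp [h0, isHomogeneous_zero]
  · apply isHomogeneous_monomial
    have hmd : m.degree = d := coeff_degree hp (MvPolynomial.mem_support_iff.mp hm)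
    rw [degree_fin] at hmd
    rw [degree_fin]
    rw [← Finset.add_sum_erase _ _ (Finset.mem_univ i)] at hmd ⊢
    have he : ∑ k ∈ Finset.univ.erase i, (m - Finsupp.single i 1 : Fin n →₀ ℕ) k
        = ∑ k ∈ Finset.univ.erase i, m k := by
      apply Finset.sum_congr rfl
      intro k hk
      simp [Finsupp.tsub_apply, Finsupp.single_apply, (Finset.ne_of_mem_erase hk).symm]
    rw [he]
    have hi : (m - Finsupp.single i 1 : Fin n →₀ ℕ) i = m i - 1 := by
      simp [Finsupp.tsub_apply]
    rw [hi]
    omega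

lemma euler {p : MvPolynomial (Fin n) ℂ} {d : ℕ} (hp : p.IsHomogeneous d) :
    ∑ i, X i * pderiv i p = C (d : ℂ) * p := by
  conv_lhs => rw [p.as_sum]
  conv_rhs => rw [p.as_sum]
  simp only [map_sum, Finset.mul_sum]
  rw [Finset.sum_comm]
  apply Finset.sum_congr rfl
  intro m hm
  have hmd : m.degree = d := coeff_degree hp (MvPolynomial.mem_support_iff.mp hm)
  have key : ∀ i : Fin n, X i * pderiv i (monomial m (coeff m p))
      = monomial m (coeff m p * (m i : ℂ)) := by
    intro i
    rw [pderiv_monomial]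
    by_cases h0 : m i = 0
    · simp [h0]
    · have hX : (X i : MvPolynomial (Fin n) ℂ) = monomial (Finsupp.single i 1) 1 := rfl
      rw [hX, monomial_mul, one_mul]
      have hexp : Finsupp.single i 1 + (m - Finsupp.single i 1) = m := by
        ext k
        simp only [Finsupp.add_apply, Finsupp.tsub_apply, Finsupp.single_apply]
        by_cases hk : i = k
        · subst hk; simp; omega
        · simp [hk]
      rw [hexp]
  calc ∑ i, X i * pderiv i (monomial m (coeff m p))
      = ∑ i, monomial m (coeff m p * (m i : ℂ)) := by
        exact Finset.sum_congr rfl (fun i _ => key i)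
    _ = monomial m (∑ i, coeff m p * (m i : ℂ)) := by rw [← map_sum]
    _ = monomial m ((d : ℂ) * coeff m p) := by
        congr 1
        rw [← Finset.mul_sum]
        rw [← Nat.cast_sum, ← degree_fin, hmd]
        ring
    _ = C (d : ℂ) * monomial m (coeff m p) := by rw [C_mul_monomial]

lemma eval_smul {p : MvPolynomial (Fin n) ℂ} {d : ℕ} (hp : p.IsHomogeneous d)
    (c : ℂ) (x : Fin n → ℂ) : eval (c • x) p = c ^ d * eval x p := by
  rw [eval_eq', eval_eq', Finset.mul_sum]
  apply Finset.sum_congr rfl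
  intro m hm
  have hmd : m.degree = d := coeff_degree hp (MvPolynomial.mem_support_iff.mp hm)
  have : ∏ i, (c • x) i ^ m i = c ^ d * ∏ i, x i ^ m i := by
    simp only [Pi.smul_apply, smul_eq_mul, mul_pow]
    rw [Finset.prod_mul_distrib, Finset.prod_pow_eq_pow_sum, ← degree_fin, hmd]
  rw [this]
  ring


lemma eval_aeval (z : ℂ) (s : Fin n → Polynomial ℂ) (q : MvPolynomial (Fin n) ℂ) :
    Polynomial.eval z (MvPolynomial.aeval s q)
      = MvPolynomial.eval (fun k => Polynomial.eval z (s k)) q := by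
  induction q using MvPolynomial.induction_on with
  | C a => simp
  | add f g hf hg => simp [hf, hg]
  | mul_X f i hf => simp [hf]

lemma deriv_aeval (y v : Fin n → ℂ) (q : MvPolynomial (Fin n) ℂ) :
    Polynomial.derivative
        (MvPolynomial.aeval (fun k => Polynomial.C (y k) + Polynomial.C (v k) * Polynomial.X) q)
      = MvPolynomial.aeval (fun k => Polynomial.C (y k) + Polynomial.C (v k) * Polynomial.X)
        (∑ k, C (v k) * pderiv k q) := by
  set s : Fin n → Polynomial ℂ := fun k => Polynomial.C (y k) + Polynomial.C (v k) * Polynomial.X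
    with hs
  induction q using MvPolynomial.induction_on with
  | C a => simp
  | add f g hf hg =>
    simp only [map_add, mul_add, Finset.sum_add_distrib] at *
    rw [hf, hg]
  | mul_X f i hf =>
    have hR : (∑ k, C (v k) * pderiv k (f * X i))
        = (∑ k, C (v k) * pderiv k f) * X i + C (v i) * f := by
      have : ∀ k, C (v k) * pderiv k (f * X i)
          = C (v k) * pderiv k f * X i + C (v k) * (f * pderiv k (X i)) := by
        intro k; rw [pderiv_mul]; ring
      rw [Finset.sum_congr rfl (fun k _ => this k), Finset.sum_add_distrib, ← Finset.sum_mul]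
      congr 1
      rw [Finset.sum_eq_single i]
      · rw [pderiv_X_self]; ring
      · intro k _ hk
        rw [pderiv_X_of_ne (Ne.symm hk)]
        ring
      · intro h; exact absurd (Finset.mem_univ i) h
    rw [map_mul, aeval_X, Polynomial.derivative_mul, hf, hR]
    simp only [map_add, map_mul, aeval_X, aeval_C, Polynomial.algebraMap_eq, hs,
      Polynomial.derivative_C, Polynomial.derivative_mul, Polynomial.derivative_X]
    ring

lemma translate (q : MvPolynomial (Fin n) ℂ) (v : Fin n → ℂ)
    (hv : ∑ k, C (v k) * pderiv k q = 0) (y : Fin n → ℂ) :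
    eval (y + v) q = eval y q := by
  set s : Fin n → Polynomial ℂ := fun k => Polynomial.C (y k) + Polynomial.C (v k) * Polynomial.X
    with hs
  have hd : Polynomial.derivative (MvPolynomial.aeval s q) = 0 := by
    rw [hs, deriv_aeval, hv, map_zero]
  have hC := Polynomial.eq_C_of_derivative_eq_zero hd
  have e1 : (fun k => Polynomial.eval 1 (s k)) = y + v := by
    funext k; simp [hs]
  have e0 : (fun k => Polynomial.eval 0 (s k)) = y := by
    funext k; simp [hs]
  have h1 : eval (y + v) q = Polynomial.eval 1 (MvPolynomial.aeval s q) := by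
    rw [eval_aeval, e1]
  have h0 : eval y q = Polynomial.eval 0 (MvPolynomial.aeval s q) := by
    rw [eval_aeval, e0]
  rw [h1, h0, hC]
  simp


lemma prime_X (i : Fin n) : Prime (X i : MvPolynomial (Fin n) ℂ) := by
  cases n with
  | zero => exact i.elim0
  | succ m =>
    let e := (renameEquiv ℂ (Equiv.swap i 0)).trans (finSuccEquiv ℂ m)
    have he : e (X i) = Polynomial.X := by
      simp only [e, AlgEquiv.trans_apply, renameEquiv_apply, rename_X, Equiv.swap_apply_left,
        finSuccEquiv_X_zero]
    have hp : Prime ((e : MvPolynomial (Fin (m + 1)) ℂ ≃*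
        Polynomial (MvPolynomial (Fin m) ℂ)) (X i)) := by
      show Prime (e (X i))
      rw [he]
      exact Polynomial.prime_X
    exact (MulEquiv.prime_iff (e : MvPolynomial (Fin (m + 1)) ℂ ≃*
          Polynomial (MvPolynomial (Fin m) ℂ))).mp hp

lemma prime_linear (w : Fin n → ℂ) (k₀ : Fin n) (hw : w k₀ ≠ 0) :
    Prime (∑ k, C (w k) * X k : MvPolynomial (Fin n) ℂ) := by
  classical
  set s : Fin n → MvPolynomial (Fin n) ℂ := fun k =>
    if k = k₀ then C (w k₀)⁻¹ * (X k₀ - ∑ l ∈ Finset.univ.erase k₀, C (w l) * X l) else X k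
    with hs
  set t : Fin n → MvPolynomial (Fin n) ℂ := fun k =>
    if k = k₀ then ∑ l, C (w l) * X l else X k with ht
  have hsum : ∀ (u : Fin n → MvPolynomial (Fin n) ℂ) (S : Finset (Fin n)),
      aeval u (∑ l ∈ S, C (w l) * X l) = ∑ l ∈ S, C (w l) * u l := by
    intro u S
    rw [map_sum]
    apply Finset.sum_congr rfl
    intro l _
    rw [map_mul, aeval_X, aeval_C, MvPolynomial.algebraMap_eq]
  have hsk0 : s k₀ = C (w k₀)⁻¹ * (X k₀ - ∑ l ∈ Finset.univ.erase k₀, C (w l) * X l) := by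
    rw [hs]; simp
  have hsk : ∀ k, k ≠ k₀ → s k = X k := by intro k hk; rw [hs]; simp [hk]
  have htk0 : t k₀ = ∑ l, C (w l) * X l := by rw [ht]; simp
  have htk : ∀ k, k ≠ k₀ → t k = X k := by intro k hk; rw [ht]; simp [hk]
  have hft : ∀ k, aeval s (t k) = X k := by
    intro k
    by_cases hk : k = k₀
    · subst hk
      rw [htk0, hsum, ← Finset.add_sum_erase _ _ (Finset.mem_univ k), hsk0]
      have h2 : ∑ l ∈ Finset.univ.erase k, C (w l) * s l
          = ∑ l ∈ Finset.univ.erase k, C (w l) * X l := by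
        apply Finset.sum_congr rfl
        intro l hl
        rw [hsk l (Finset.ne_of_mem_erase hl)]
      rw [h2, ← mul_assoc, ← map_mul, mul_inv_cancel₀ hw, map_one, one_mul, sub_add_cancel]
    · rw [htk k hk, aeval_X, hsk k hk]
  have htf : ∀ k, aeval t (s k) = X k := by
    intro k
    by_cases hk : k = k₀
    · subst hk
      rw [hsk0, map_mul, map_sub, aeval_X, aeval_C, htk0, hsum]
      have h2 : ∑ l ∈ Finset.univ.erase k, C (w l) * t l
          = ∑ l ∈ Finset.univ.erase k, C (w l) * X l := by
        apply Finset.sum_congr rfl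
        intro l hl
        rw [htk l (Finset.ne_of_mem_erase hl)]
      rw [h2, ← Finset.add_sum_erase _ _ (Finset.mem_univ k), add_sub_cancel_right,
        MvPolynomial.algebraMap_eq, ← mul_assoc, ← map_mul, inv_mul_cancel₀ hw, map_one, one_mul]
    · rw [hsk k hk, aeval_X, htk k hk]
  let e : MvPolynomial (Fin n) ℂ ≃ₐ[ℂ] MvPolynomial (Fin n) ℂ :=
    AlgEquiv.ofAlgHom (aeval s) (aeval t)
      (by apply MvPolynomial.algHom_ext; intro k; simpa using hft k)
      (by apply MvPolynomial.algHom_ext; intro k; simpa using htf k)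
  have hp : Prime ((e : MvPolynomial (Fin n) ℂ ≃* MvPolynomial (Fin n) ℂ)
      (∑ k, C (w k) * X k)) := by
    show Prime (e (∑ k, C (w k) * X k))
    have he : e (∑ k, C (w k) * X k) = X k₀ := by
      show aeval s (∑ k, C (w k) * X k) = X k₀
      rw [← htk0]
      exact hft k₀
    rw [he]
    exact prime_X k₀
  exact (MulEquiv.prime_iff (e : MvPolynomial (Fin n) ℂ ≃* MvPolynomial (Fin n) ℂ)).mp hp

lemma dvd_of_vanish (q r : MvPolynomial (Fin n) ℂ) (hq : Prime q)
    (h : ∀ x, eval x q = 0 → eval x r = 0) : q ∣ r := by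
  have hr : r ∈ vanishingIdeal ℂ (zeroLocus ℂ (Ideal.span {q})) := by
    rw [mem_vanishingIdeal_iff]
    intro x hx
    exact h x (hx q (Ideal.subset_span rfl))
  rw [vanishingIdeal_zeroLocus_eq_radical, Ideal.mem_radical_iff] at hr
  obtain ⟨m, hm⟩ := hr
  rw [Ideal.mem_span_singleton] at hm
  exact hq.dvd_of_dvd_pow hm

lemma eq_C_mul {p q : MvPolynomial (Fin n) ℂ} {d : ℕ} (hp : p.IsHomogeneous d)
    (hq : q.IsHomogeneous d) (hp0 : p ≠ 0) (hdvd : p ∣ q) : ∃ c : ℂ, q = C c * p := by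
  obtain ⟨r, hr⟩ := hdvd
  refine ⟨coeff 0 r, ?_⟩
  have hcomp : ∀ m : ℕ, m ≠ 0 → homogeneousComponent m r = 0 := by
    intro m hm
    by_cases hle : m ≤ r.totalDegree
    · have h1 : homogeneousComponent (d + m) q = 0 := by
        rw [homogeneousComponent_of_mem ((mem_homogeneousSubmodule _ _).mpr hq)]
        rw [if_neg (by omega)]
      have h2 : homogeneousComponent (d + m) q = p * homogeneousComponent m r := by
        conv_lhs => rw [hr]
        conv_lhs => rw [← sum_homogeneousComponent r]
        rw [Finset.mul_sum, map_sum]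
        rw [Finset.sum_eq_single m]
        · rw [homogeneousComponent_of_mem ((mem_homogeneousSubmodule _ _).mpr
            (hp.mul (homogeneousComponent_isHomogeneous m r)))]
          simp
        · intro b _ hb
          rw [homogeneousComponent_of_mem ((mem_homogeneousSubmodule _ _).mpr
            (hp.mul (homogeneousComponent_isHomogeneous b r)))]
          rw [if_neg (by omega)]
        · intro hnot
          exfalso
          exact hnot (Finset.mem_range.mpr (Nat.lt_succ_of_le hle))
      rw [h1] at h2
      rcases mul_eq_zero.mp h2.symm with h | h
      · exact absurd h hp0
      · exact h
    · exact homogeneousComponent_eq_zero _ _ (not_le.mp hle)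
  have hrC : r = C (coeff 0 r) := by
    conv_lhs => rw [← sum_homogeneousComponent r]
    rw [Finset.sum_eq_single 0]
    · exact homogeneousComponent_zero r
    · intro b _ hb
      exact hcomp b hb
    · intro h
      exact absurd (Finset.mem_range.mpr (Nat.succ_pos _)) h
  rw [hr]
  conv_lhs => rw [hrC]
  exact mul_comm _ _

end HatCone

open HatCone

set_option maxHeartbeats 2000000 in
/-- Nondegeneracy of `Ĉ`: if `C ⊆ ℂⁿ` is an irreducible codimension-one algebraic cone (the zero
set of an irreducible homogeneous polynomial `p`) which is not a linear subspace, then the only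
2-form (alternating bilinear form) vanishing on all `u ∧ v` with `u` a smooth point of `C` and
`v` tangent to `C` at `u` is the zero form. -/
theorem hat_cone_nondegenerate (n : ℕ) (p : MvPolynomial (Fin n) ℂ) (d : ℕ)
    (hirr : Irreducible p) (hhom : p.IsHomogeneous d)
    (hnotlin : ∀ W : Submodule ℂ (Fin n → ℂ),
      {v : Fin n → ℂ | eval v p = 0} ≠ (W : Set (Fin n → ℂ)))
    (ω : (Fin n → ℂ) →ₗ[ℂ] (Fin n → ℂ) →ₗ[ℂ] ℂ) (halt : ∀ v, ω v v = 0)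
    (hvan : ∀ u : Fin n → ℂ, eval u p = 0 →
      (∃ i : Fin n, eval u (pderiv i p) ≠ 0) →
      ∀ v : Fin n → ℂ, (∑ i : Fin n, v i * eval u (pderiv i p)) = 0 → ω u v = 0) :
    ω = 0 := by
  classical
  set e : Fin n → (Fin n → ℂ) := fun i => Pi.single i 1 with he
  have hxsum : ∀ x : Fin n → ℂ, x = ∑ k, x k • e k := by
    intro x
    rw [he]
    have : ∀ k, x k • (Pi.single k 1 : Fin n → ℂ) = Pi.single k (x k) := by
      intro k
      rw [← Pi.single_smul, smul_eq_mul, mul_one]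
    rw [Finset.sum_congr rfl (fun k _ => this k), Finset.univ_sum_single]
  have hfst : ∀ x v : Fin n → ℂ, ω x v = ∑ k, x k * ω (e k) v := by
    intro x v
    conv_lhs => rw [hxsum x]
    rw [map_sum, LinearMap.sum_apply]
    apply Finset.sum_congr rfl
    intro k _
    rw [map_smul, LinearMap.smul_apply, smul_eq_mul]
  have hsnd : ∀ u v : Fin n → ℂ, ω u v = ∑ k, v k * ω u (e k) := by
    intro u v
    conv_lhs => rw [hxsum v]
    rw [map_sum]
    apply Finset.sum_congr rfl
    intro k _
    rw [map_smul, smul_eq_mul]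
  set A : Fin n → Fin n → ℂ := fun i j => ω (e i) (e j) with hA
  have hAskew : ∀ i j, A j i = - A i j := by
    intro i j
    have h := halt (e i + e j)
    simp only [map_add, LinearMap.add_apply] at h
    have h1 := halt (e i)
    have h2 := halt (e j)
    rw [hA]
    simp only
    linear_combination h - h1 - h2
  have hAdiag : ∀ i, A i i = 0 := fun i => halt (e i)
  set D : Fin n → MvPolynomial (Fin n) ℂ := fun i => pderiv i p with hD
  have hp0 : p ≠ 0 := hirr.ne_zero
  have hprime : Prime p := UniqueFactorizationMonoid.irreducible_iff_prime.mp hirr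
  have hd1 : 1 ≤ d := by
    by_contra hcon
    have hd0 : d = 0 := by omega
    subst hd0
    have hsupp : p.support ⊆ {0} := by
      intro m hm
      have hdeg := coeff_degree hhom (MvPolynomial.mem_support_iff.mp hm)
      rw [Finsupp.degree_eq_zero_iff] at hdeg
      simp [hdeg]
    have hpC : p = C (coeff 0 p) := by
      conv_lhs => rw [p.as_sum]
      rw [Finset.sum_subset hsupp (fun m _ hm => by
        rw [MvPolynomial.notMem_support_iff.mp hm, map_zero])]
      rw [Finset.sum_singleton]
      rfl
    by_cases ha0 : coeff 0 p = 0
    · rw [hpC, ha0, map_zero] at hp0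
      exact hp0 rfl
    · refine hirr.not_isUnit ?_
      rw [hpC]
      exact IsUnit.of_mul_eq_one (C (coeff 0 p)⁻¹)
        (by rw [← map_mul, mul_inv_cancel₀ ha0, map_one])
  set P : Fin n → MvPolynomial (Fin n) ℂ := fun j => ∑ k, C (A k j) * X k with hP
  have hPeval : ∀ (x : Fin n → ℂ) (j), eval x (P j) = ω x (e j) := by
    intro x j
    rw [hfst x (e j), hP]
    simp only [map_sum, eval_mul, eval_C, eval_X]
    exact Finset.sum_congr rfl (fun k _ => mul_comm _ _)
  have hPhom : ∀ j, (P j).IsHomogeneous 1 := by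
    intro j
    rw [hP]
    exact MvPolynomial.IsHomogeneous.sum _ _ _ (fun k _ => isHomogeneous_C_mul_X _ _)
  have hDhom : ∀ i, (D i).IsHomogeneous (d - 1) := fun i => pderiv_homog hhom hd1 i
  set q : Fin n → Fin n → MvPolynomial (Fin n) ℂ := fun i j => P i * D j - P j * D i with hq
  have hkeyvan : ∀ (x : Fin n → ℂ), eval x p = 0 → ∀ i j,
      ω x (e i) * eval x (D j) - ω x (e j) * eval x (D i) = 0 := by
    intro x hx i j
    by_cases hsm : ∃ k, eval x (pderiv k p) ≠ 0
    · set v : Fin n → ℂ := eval x (D j) • e i - eval x (D i) • e j with hv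
      have hvtan : ∑ k, v k * eval x (pderiv k p) = 0 := by
        have hexp : ∀ k, v k = eval x (D j) * (if k = i then 1 else 0)
            - eval x (D i) * (if k = j then 1 else 0) := by
          intro k
          rw [hv]
          simp [he, Pi.single_apply]
        rw [Finset.sum_congr rfl (fun k _ => by rw [hexp k])]
        simp only [sub_mul, mul_ite, mul_one, mul_zero, ite_mul, zero_mul]
        rw [Finset.sum_sub_distrib, Finset.sum_ite_eq' Finset.univ i, Finset.sum_ite_eq'
          Finset.univ j]
        simp only [Finset.mem_univ, if_true, hD]
        ring
      have h0 := hvan x hx hsm v hvtan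
      have hexp2 : ω x v = eval x (D j) * ω x (e i) - eval x (D i) * ω x (e j) := by
        rw [hv, map_sub, map_smul, map_smul]
        simp
      rw [hexp2] at h0
      linear_combination h0
    · push_neg at hsm
      rw [hD]
      simp only
      rw [hsm i, hsm j]
      ring
  have hqc : ∀ i j, ∃ c : ℂ, q i j = C c * p := by
    intro i j
    have hvanq : ∀ x, eval x p = 0 → eval x (q i j) = 0 := by
      intro x hx
      rw [hq]
      simp only [map_sub, eval_mul]
      rw [hPeval, hPeval]
      linear_combination hkeyvan x hx i j
    have hdvd : p ∣ q i j := dvd_of_vanish p (q i j) hprime hvanq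
    have hqhom : (q i j).IsHomogeneous d := by
      have h1d : 1 + (d - 1) = d := by omega
      have hm1 : (P i * D j).IsHomogeneous d := by
        have := (hPhom i).mul (hDhom j)
        rwa [h1d] at this
      have hm2 : (P j * D i).IsHomogeneous d := by
        have := (hPhom j).mul (hDhom i)
        rwa [h1d] at this
      exact hm1.sub hm2
    exact eq_C_mul hhom hqhom hp0 hdvd
  choose c hc using hqc
  have hXP : ∑ i, X i * P i = 0 := by
    apply MvPolynomial.funext
    intro x
    rw [map_sum, map_zero]
    have : ∀ i, eval x (X i * P i) = x i * eval x (P i) := by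
      intro i
      rw [eval_mul, eval_X]
    rw [Finset.sum_congr rfl (fun i _ => this i)]
    have h2 : ∑ i, x i * eval x (P i) = ω x x := by
      rw [hsnd x x]
      exact Finset.sum_congr rfl (fun k _ => by rw [hPeval])
    rw [h2, halt]
  have hEuler : ∑ i, X i * D i = C (d : ℂ) * p := euler hhom
  have hcA : ∀ k j, c k j = -(d : ℂ) * A k j := by
    have hfac : ∀ j, C (d : ℂ) * P j + (∑ i, C (c i j) * X i) = 0 := by
      intro j
      have h1 : ∑ i, X i * q i j = (∑ i, X i * P i) * D j - P j * (∑ i, X i * D i) := by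
        rw [Finset.sum_congr rfl (fun i (_ : i ∈ Finset.univ) => show X i * q i j
          = (X i * P i) * D j - P j * (X i * D i) by rw [hq]; ring)]
        rw [Finset.sum_sub_distrib, ← Finset.sum_mul, ← Finset.mul_sum]
      have h2 : ∑ i, X i * q i j = (∑ i, C (c i j) * X i) * p := by
        rw [Finset.sum_congr rfl (fun i (_ : i ∈ Finset.univ) => show X i * q i j
          = (C (c i j) * X i) * p by rw [hc i j]; ring)]
        rw [Finset.sum_mul]
      rw [hXP, hEuler] at h1
      have h3 : p * (C (d : ℂ) * P j + (∑ i, C (c i j) * X i)) = 0 := by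
        linear_combination h1 - h2
      exact (mul_eq_zero.mp h3).resolve_left hp0
    intro k j
    have h4 := congrArg (eval (e k)) (hfac j)
    simp only [map_add, map_sum, eval_mul, eval_C, eval_X, map_zero] at h4
    have h5 : ∑ i, c i j * e k i = c k j := by
      have : ∀ i, c i j * e k i = if i = k then c i j else 0 := by
        intro i
        rw [he]
        simp only [Pi.single_apply]
        by_cases hik : i = k
        · simp [hik]
        · simp [hik]
      rw [Finset.sum_congr rfl (fun i _ => this i), Finset.sum_ite_eq' Finset.univ k]
      simp
    rw [h5] at h4
    have h6 : eval (e k) (P j) = A k j := by rw [hPeval]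
    rw [h6] at h4
    linear_combination h4
  have hPder : ∀ i k, pderiv k (P i) = C (A k i) := by
    intro i k
    rw [hP]
    simp only [map_sum]
    rw [Finset.sum_congr rfl (fun l (_ : l ∈ Finset.univ) => pderiv_C_mul (f := X l))]
    rw [Finset.sum_eq_single k]
    · rw [pderiv_X_self, mul_one]
    · intro l _ hl
      rw [pderiv_X_of_ne hl, mul_zero]
    · intro hk
      exact absurd (Finset.mem_univ k) hk
  have hS : ∀ i j k, C (A i j) * D k + C (A j k) * D i + C (A k i) * D j = 0 := by
    have hE : ∀ i j k, C (A k i) * D j + P i * pderiv k (D j)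
        - (C (A k j) * D i + P j * pderiv k (D i)) = C (c i j) * D k := by
      intro i j k
      have := congrArg (pderiv k) (hc i j)
      rw [hq] at this
      simp only [map_sub] at this
      rw [pderiv_mul, pderiv_mul, pderiv_C_mul, hPder, hPder] at this
      rw [hD]
      linear_combination this
    intro i j k
    have h1 := hE i j k
    have h2 := hE j k i
    have h3 := hE k i j
    have hw1 : pderiv i (D k) = pderiv k (D i) := by rw [hD]; exact HatCone.pderiv_comm i k p
    have hw2 : pderiv i (D j) = pderiv j (D i) := by rw [hD]; exact HatCone.pderiv_comm i j p
    have hw3 : pderiv j (D k) = pderiv k (D j) := by rw [hD]; exact HatCone.pderiv_comm j k p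
    rw [hw1, hw2] at h2
    rw [hw3] at h3
    have hx1 : (C (A k j) : MvPolynomial (Fin n) ℂ) = -C (A j k) := by
      rw [hAskew j k, map_neg]
    have hx2 : (C (A i k) : MvPolynomial (Fin n) ℂ) = -C (A k i) := by
      rw [hAskew k i, map_neg]
    have hx3 : (C (A j i) : MvPolynomial (Fin n) ℂ) = -C (A i j) := by
      rw [hAskew i j, map_neg]
    rw [hx1] at h1
    rw [hx2] at h2
    rw [hx3] at h3
    have hy1 : (C (c i j) : MvPolynomial (Fin n) ℂ) = -(C ((d : ℂ)) * C (A i j)) := by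
      rw [hcA i j, map_mul, map_neg]
      ring
    have hy2 : (C (c j k) : MvPolynomial (Fin n) ℂ) = -(C ((d : ℂ)) * C (A j k)) := by
      rw [hcA j k, map_mul, map_neg]
      ring
    have hy3 : (C (c k i) : MvPolynomial (Fin n) ℂ) = -(C ((d : ℂ)) * C (A k i)) := by
      rw [hcA k i, map_mul, map_neg]
      ring
    rw [hy1] at h1
    rw [hy2] at h2
    rw [hy3] at h3
    have hS2 : (C ((d : ℂ)) + 2) * (C (A i j) * D k + C (A j k) * D i + C (A k i) * D j) = 0 := by
      linear_combination h1 + h2 + h3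
    have hCd : (C ((d : ℂ)) + 2 : MvPolynomial (Fin n) ℂ) = C ((d : ℂ) + 2) := by
      rw [map_add]
      rw [map_ofNat]
    rw [hCd] at hS2
    rcases mul_eq_zero.mp hS2 with h | h
    · exfalso
      rw [MvPolynomial.C_eq_zero] at h
      have : ((d : ℂ) + 2) ≠ 0 := by
        have : ((d : ℂ) + 2) = ((d + 2 : ℕ) : ℂ) := by push_cast; ring
        rw [this]
        exact Nat.cast_ne_zero.mpr (by omega)
      exact this h
    · exact h
  have hAzero : ∀ i j, A i j = 0 := by
    by_contra hcon
    push_neg at hcon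
    obtain ⟨i₀, j₀, hA0⟩ := hcon
    have hij : i₀ ≠ j₀ := by
      rintro rfl
      exact hA0 (hAdiag i₀)
    set a : Fin n → ℂ := fun k => -(A j₀ k) / A i₀ j₀ with ha
    set b : Fin n → ℂ := fun k => -(A k i₀) / A i₀ j₀ with hb
    have hDk : ∀ k, D k = C (a k) * D i₀ + C (b k) * D j₀ := by
      intro k
      have hCne : (C (A i₀ j₀) : MvPolynomial (Fin n) ℂ) ≠ 0 := by
        rw [Ne, MvPolynomial.C_eq_zero]
        exact hA0
      apply mul_left_cancel₀ hCne
      have hC1 : (C (A i₀ j₀) : MvPolynomial (Fin n) ℂ) * C (a k) = - C (A j₀ k) := by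
        rw [← map_mul, ← map_neg]
        congr 1
        simp only [ha]
        field_simp
      have hC2 : (C (A i₀ j₀) : MvPolynomial (Fin n) ℂ) * C (b k) = - C (A k i₀) := by
        rw [← map_mul, ← map_neg]
        congr 1
        simp only [hb]
        field_simp
      have hs := hS i₀ j₀ k
      linear_combination hs - D i₀ * hC1 - D j₀ * hC2
    have hai : a i₀ = 1 := by
      simp only [ha]
      rw [hAskew i₀ j₀]
      field_simp
    have haj : a j₀ = 0 := by
      simp only [ha]
      rw [hAdiag j₀]
      simp
    have hbi : b i₀ = 0 := by
      simp only [hb]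
      rw [hAdiag i₀]
      simp
    have hbj : b j₀ = 1 := by
      simp only [hb]
      rw [hAskew i₀ j₀]
      field_simp
    set sa : (Fin n → ℂ) → ℂ := fun x => ∑ k, x k * a k with hsa
    set sb : (Fin n → ℂ) → ℂ := fun x => ∑ k, x k * b k with hsb
    have hcollapse : ∀ (g : Fin n → ℂ) (l : Fin n), ∑ k, e l k * g k = g l := by
      intro g l
      rw [he]
      simp only [Pi.single_apply, ite_mul, one_mul, zero_mul]
      rw [Finset.sum_ite_eq' Finset.univ l g]
      simp
    have hsae : ∀ l, sa (e l) = a l := by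
      intro l
      simp only [hsa]
      exact hcollapse a l
    have hsbe : ∀ l, sb (e l) = b l := by
      intro l
      simp only [hsb]
      exact hcollapse b l
    have htrans : ∀ v : Fin n → ℂ, sa v = 0 → sb v = 0 →
        ∀ y, eval (y + v) p = eval y p := by
      intro v hva hvb y
      apply HatCone.translate
      have hterm : ∀ k, C (v k) * pderiv k p = C (v k * a k) * D i₀ + C (v k * b k) * D j₀ := by
        intro k
        have hk := hDk k
        rw [hD] at hk
        simp only at hk
        rw [hk, map_mul, map_mul]
        ring
      rw [Finset.sum_congr rfl (fun k (_ : k ∈ Finset.univ) => hterm k), Finset.sum_add_distrib,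
        ← Finset.sum_mul, ← Finset.sum_mul, ← map_sum, ← map_sum]
      rw [show (∑ k, v k * a k) = 0 from hva, show (∑ k, v k * b k) = 0 from hvb]
      simp
    set F : ℂ → ℂ → ℂ := fun s t => eval (s • e i₀ + t • e j₀) p with hF
    have hrep : ∀ x, eval x p = F (sa x) (sb x) := by
      intro x
      set y : Fin n → ℂ := sa x • e i₀ + sb x • e j₀ with hy
      have hyk : ∀ k, y k = sa x * e i₀ k + sb x * e j₀ k := by
        intro k
        rw [hy]
        simp
      have hsay : sa (x - y) = 0 := by
        simp only [hsa]
        rw [Finset.sum_congr rfl (fun k (_ : k ∈ Finset.univ) => by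
          rw [Pi.sub_apply, hyk k, sub_mul, add_mul])]
        rw [Finset.sum_sub_distrib, Finset.sum_add_distrib]
        have e1 : ∑ k, sa x * e i₀ k * a k = sa x * a i₀ := by
          rw [Finset.sum_congr rfl (fun k (_ : k ∈ Finset.univ) =>
            mul_assoc (sa x) (e i₀ k) (a k)), ← Finset.mul_sum, hcollapse a i₀]
        have e2 : ∑ k, sb x * e j₀ k * a k = sb x * a j₀ := by
          rw [Finset.sum_congr rfl (fun k (_ : k ∈ Finset.univ) =>
            mul_assoc (sb x) (e j₀ k) (a k)), ← Finset.mul_sum, hcollapse a j₀]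
        have e0 : ∑ k, x k * a k = sa x := rfl
        rw [e0, e1, e2, hai, haj]
        ring
      have hsby : sb (x - y) = 0 := by
        simp only [hsb]
        rw [Finset.sum_congr rfl (fun k (_ : k ∈ Finset.univ) => by
          rw [Pi.sub_apply, hyk k, sub_mul, add_mul])]
        rw [Finset.sum_sub_distrib, Finset.sum_add_distrib]
        have e1 : ∑ k, sa x * e i₀ k * b k = sa x * b i₀ := by
          rw [Finset.sum_congr rfl (fun k (_ : k ∈ Finset.univ) =>
            mul_assoc (sa x) (e i₀ k) (b k)), ← Finset.mul_sum, hcollapse b i₀]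
        have e2 : ∑ k, sb x * e j₀ k * b k = sb x * b j₀ := by
          rw [Finset.sum_congr rfl (fun k (_ : k ∈ Finset.univ) =>
            mul_assoc (sb x) (e j₀ k) (b k)), ← Finset.mul_sum, hcollapse b j₀]
        have e0 : ∑ k, x k * b k = sb x := rfl
        rw [e0, e1, e2, hbi, hbj]
        ring
      have h7 := htrans (x - y) hsay hsby y
      rw [show y + (x - y) = x from by abel] at h7
      rw [hF]
      exact h7
    have hscale : ∀ (u s t : ℂ), F (u * s) (u * t) = u ^ d * F s t := by
      intro u s t
      simp only [hF]
      have hv : (u * s) • e i₀ + (u * t) • e j₀ = u • (s • e i₀ + t • e j₀) := by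
        rw [smul_add, smul_smul, smul_smul]
      rw [hv, HatCone.eval_smul hhom]
    have hker : ∀ u : Fin n → ℂ, ({v : Fin n → ℂ | eval v p = 0}
        = {x : Fin n → ℂ | ∑ k, u k * x k = 0}) → False := by
      intro u hu
      let L : (Fin n → ℂ) →ₗ[ℂ] ℂ :=
        { toFun := fun x => ∑ k, u k * x k
          map_add' := by
            intro x y
            simp only [Pi.add_apply, mul_add]
            rw [Finset.sum_add_distrib]
          map_smul' := by
            intro m x
            simp only [Pi.smul_apply, smul_eq_mul, RingHom.id_apply]
            rw [Finset.mul_sum]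
            exact Finset.sum_congr rfl (fun k _ => by ring) }
      apply hnotlin (LinearMap.ker L)
      rw [hu]
      ext x
      simp only [Set.mem_setOf_eq, SetLike.mem_coe, LinearMap.mem_ker]
      exact Iff.rfl
    obtain ⟨α, β, hαβ, hroot⟩ : ∃ α β : ℂ, (β ≠ 0 ∨ α ≠ 0)
        ∧ ∀ s t, β * s = α * t → F s t = 0 := by
      by_cases hF10 : F 1 0 = 0
      · refine ⟨1, 0, Or.inr one_ne_zero, ?_⟩
        intro s t hst
        rw [zero_mul, one_mul] at hst
        rw [← hst]
        have h8 := hscale s 1 0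
        rw [mul_one, mul_zero] at h8
        rw [h8, hF10, mul_zero]
      · set g : Polynomial ℂ := MvPolynomial.aeval
          (fun k => if k = i₀ then Polynomial.X else if k = j₀ then 1 else 0) p with hg
        have hgeval : ∀ z, Polynomial.eval z g = F z 1 := by
          intro z
          rw [hg, HatCone.eval_aeval]
          simp only [hF]
          have harg : (fun k => Polynomial.eval z
              (if k = i₀ then Polynomial.X else if k = j₀ then 1 else 0))
              = (z • e i₀ + (1:ℂ) • e j₀ : Fin n → ℂ) := by
            funext k
            by_cases hk : k = i₀
            · subst hk
              simp [he, Pi.single_apply, hij, Ne.symm hij]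
            · by_cases hk2 : k = j₀
              · subst hk2
                simp [hk, he, Pi.single_apply]
              · simp [hk, hk2, he, Pi.single_apply]
          rw [harg]
        by_cases hdeg : 0 < g.degree
        · obtain ⟨z₀, hz₀⟩ := IsAlgClosed.exists_root g hdeg.ne'
          refine ⟨z₀, 1, Or.inl one_ne_zero, ?_⟩
          intro s t hst
          rw [one_mul] at hst
          have h8 := hscale t z₀ 1
          rw [mul_one] at h8
          have h9 : F z₀ 1 = 0 := by rw [← hgeval]; exact hz₀
          rw [hst, mul_comm z₀ t, h8, h9, mul_zero]
        · push_neg at hdeg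
          have hgC : g = Polynomial.C (g.coeff 0) := Polynomial.eq_C_of_degree_le_zero hdeg
          have hFc : ∀ z, F z 1 = g.coeff 0 := by
            intro z
            rw [← hgeval z]
            conv_lhs => rw [hgC]
            simp
          set lb : MvPolynomial (Fin n) ℂ := ∑ k, C (b k) * X k with hlb
          have hlbeval : ∀ x, eval x lb = sb x := by
            intro x
            rw [hlb]
            simp only [map_sum, eval_mul, eval_C, eval_X]
            exact Finset.sum_congr rfl (fun k _ => mul_comm _ _)
          have hkey2 : lb * (p - C (g.coeff 0) * lb ^ d) = 0 := by
            apply MvPolynomial.funext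
            intro x
            simp only [map_mul, map_sub, map_pow, eval_C, map_zero]
            rw [hlbeval]
            by_cases hsbx : sb x = 0
            · rw [hsbx, zero_mul]
            · have h10 : eval x p = g.coeff 0 * sb x ^ d := by
                rw [hrep x]
                have h11 := hscale (sb x) (sa x / sb x) 1
                rw [mul_one, mul_div_cancel₀ _ hsbx] at h11
                rw [h11, hFc]
                ring
              rw [h10]
              ring
          have hlbne : lb ≠ 0 := by
            intro h0
            have h12 := hlbeval (e j₀)
            rw [h0, map_zero, hsbe j₀, hbj] at h12
            exact one_ne_zero h12.symm
          have hfac2 : p = C (g.coeff 0) * lb ^ d := by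
            have h13 := (mul_eq_zero.mp hkey2).resolve_left hlbne
            linear_combination h13
          have hc0 : g.coeff 0 ≠ 0 := by
            intro h0
            rw [h0, map_zero, zero_mul] at hfac2
            exact hp0 hfac2
          exact absurd (by
            apply hker b
            ext x
            simp only [Set.mem_setOf_eq]
            have hbx : ∑ k, b k * x k = sb x := by
              simp only [hsb]
              exact Finset.sum_congr rfl (fun k _ => mul_comm _ _)
            rw [hfac2, map_mul, map_pow, eval_C, hlbeval, hbx]
            constructor
            · intro h14
              rcases mul_eq_zero.mp h14 with h | h
              · exact absurd h hc0
              · exact pow_eq_zero_iff (by omega) |>.mp h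
            · intro h14
              rw [h14, zero_pow (by omega), mul_zero]) (fun f => f)
    set w : Fin n → ℂ := fun k => β * a k - α * b k with hw
    obtain ⟨k₀, hk₀⟩ : ∃ k₀, w k₀ ≠ 0 := by
      rcases hαβ with hβ | hα
      · refine ⟨i₀, ?_⟩
        simp only [hw]
        rw [hai, hbi]
        simpa using hβ
      · refine ⟨j₀, ?_⟩
        simp only [hw]
        rw [haj, hbj]
        simpa using hα
    have hlweval : ∀ x, eval x (∑ k, C (w k) * X k) = β * sa x - α * sb x := by
      intro x
      simp only [map_sum, eval_mul, eval_C, eval_X]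
      have hterm2 : ∀ k, w k * x k = β * (x k * a k) - α * (x k * b k) := by
        intro k
        simp only [hw]
        ring
      rw [Finset.sum_congr rfl (fun k (_ : k ∈ Finset.univ) => hterm2 k),
        Finset.sum_sub_distrib, ← Finset.mul_sum, ← Finset.mul_sum]
    have hvan2 : ∀ x, eval x (∑ k, C (w k) * X k) = 0 → eval x p = 0 := by
      intro x hx
      rw [hrep x]
      apply hroot
      rw [hlweval] at hx
      exact sub_eq_zero.mp hx
    obtain ⟨m, hm⟩ := HatCone.dvd_of_vanish _ p (HatCone.prime_linear w k₀ hk₀) hvan2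
    have hmunit : IsUnit m := by
      rcases hirr.isUnit_or_isUnit hm with h | h
      · exact absurd h (HatCone.prime_linear w k₀ hk₀).not_unit
      · exact h
    have hmne : ∀ x, eval x m ≠ 0 := by
      obtain ⟨mi, hmi⟩ := isUnit_iff_exists_inv.mp hmunit
      intro x hx
      have h15 := congrArg (eval x) hmi
      rw [map_mul, hx, zero_mul, map_one] at h15
      exact zero_ne_one h15
    apply hker w
    ext x
    simp only [Set.mem_setOf_eq]
    have hwx : ∑ k, w k * x k = eval x (∑ k, C (w k) * X k) := by
      simp only [map_sum, eval_mul, eval_C, eval_X]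
    constructor
    · intro h16
      rw [hm, map_mul] at h16
      have h17 := (mul_eq_zero.mp h16).resolve_right (hmne x)
      rw [hwx]
      exact h17
    · intro h16
      rw [hwx] at h16
      rw [hm, map_mul, h16, zero_mul]
  apply LinearMap.ext

  intro u
  apply LinearMap.ext
  intro v
  show ω u v = 0
  rw [hfst u v]
  apply Finset.sum_eq_zero
  intro k _
  have hz : ω (e k) v = 0 := by
    rw [hsnd (e k) v]
    apply Finset.sum_eq_zero
    intro l _
    have hkl : (ω (e k)) (e l) = A k l := rfl
    rw [hkl, hAzero k l, mul_zero]
  rw [hz, mul_zero]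
end

section
/- Let V be a complex vector space of dimension n ≥ 3 and q a nondegenerate quadratic form on V with zero cone C = {q = 0}. For every hyperplane H ⊆ V there exists a smooth point u ∈ C with u ∉ H. (Equivalently, the smooth points of C span V.) -/
/-- Every quadratic over ℂ with nonzero leading coefficient has a root. -/
lemma exists_root_quadratic_aux (a b c : ℂ) (ha : a ≠ 0) :
    ∃ t : ℂ, a * t ^ 2 + b * t + c = 0 := by
  obtain ⟨s, hs⟩ := IsAlgClosed.exists_pow_nat_eq (b ^ 2 - 4 * a * c) (n := 2) (by norm_num)
  refine ⟨(s - b) / (2 * a), ?_⟩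
  have h2a : (2 * a) ≠ 0 := by simpa using ha
  field_simp
  linear_combination hs

/-- For a nondegenerate quadratic form on a complex vector space of dimension at least 3,
every hyperplane misses some smooth point of the zero cone. -/
theorem smooth_points_of_quadric_not_in_hyperplane (V : Type*) [AddCommGroup V] [Module ℂ V]
    [FiniteDimensional ℂ V] (hdim : 3 ≤ Module.finrank ℂ V)
    (q : QuadraticForm ℂ V)
    (hnd : ∀ u : V, (∀ v : V, QuadraticMap.polar q u v = 0) → u = 0) :
    ∀ H : Submodule ℂ V, Module.finrank ℂ H + 1 = Module.finrank ℂ V →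
      ∃ u : V, u ≠ 0 ∧ q u = 0 ∧ u ∉ H := by
  intro H hH
  by_contra hcon
  push_neg at hcon
  -- every zero of q lies in H
  have hH' : ∀ u : V, q u = 0 → u ∈ H := by
    intro u hu
    by_cases h0 : u = 0
    · simp [h0]
    · exact hcon u h0 hu
  -- find w ∉ H
  have hne : H ≠ ⊤ := by
    intro h
    have : Module.finrank ℂ H = Module.finrank ℂ V := by
      rw [h]; exact finrank_top ℂ V
    omega
  have hex : ¬ ∀ x : V, x ∈ H := fun h => hne (Submodule.eq_top_iff'.2 h)
  push_neg at hex
  obtain ⟨w, hw⟩ := hex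
  have hqw : q w ≠ 0 := fun h => hw (hH' w h)
  -- key expansion
  have key : ∀ (v : V) (t : ℂ),
      q (v + t • w) = q w * t ^ 2 + QuadraticMap.polar q v w * t + q v := by
    intro v t
    have h1 : QuadraticMap.polar q v (t • w) = q (v + t • w) - q v - q (t • w) := rfl
    have h2 : QuadraticMap.polar q v (t • w) = t • QuadraticMap.polar q v w :=
      QuadraticMap.polar_smul_right q t v w
    have h3 : q (t • w) = t * t * q w := QuadraticMap.map_smul q t w
    rw [h3] at h1
    rw [h2] at h1
    simp only [smul_eq_mul] at h1
    linear_combination -h1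
  -- q vanishes on H
  have hqH : ∀ v ∈ H, q v = 0 := by
    intro v hv
    obtain ⟨t, ht⟩ := exists_root_quadratic_aux (q w) (QuadraticMap.polar q v w) (q v) hqw
    have hmem : v + t • w ∈ H := hH' _ (by rw [key]; exact ht)
    have htw : t • w ∈ H := by
      have := H.sub_mem hmem hv
      simpa using this
    rcases eq_or_ne t 0 with rfl | ht0
    · simpa using ht
    · exact absurd (by simpa [ht0] using H.smul_mem t⁻¹ htw) hw
  -- polar vanishes on H × H
  have hpH : ∀ v ∈ H, ∀ v' ∈ H, QuadraticMap.polar q v v' = 0 := by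
    intro v hv v' hv'
    have : QuadraticMap.polar q v v' = q (v + v') - q v - q v' := rfl
    rw [this, hqH v hv, hqH v' hv', hqH (v + v') (H.add_mem hv hv')]
    ring
  -- functional h ↦ polar q h w on H
  set f : H →ₗ[ℂ] ℂ := ((QuadraticMap.polarBilin q).flip w).comp H.subtype with hf
  have hker : 0 < Module.finrank ℂ (LinearMap.ker f) := by
    have h1 := LinearMap.finrank_range_add_finrank_ker f
    have h2 : Module.finrank ℂ (LinearMap.range f) ≤ 1 := by
      simpa using Submodule.finrank_le (LinearMap.range f)
    omega
  haveI := Module.finrank_pos_iff.mp hker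
  obtain ⟨⟨⟨v, hvH⟩, hvker⟩, hvne⟩ := exists_ne (0 : LinearMap.ker f)
  have hvw : QuadraticMap.polar q (v : V) w = 0 := hvker
  -- H ⊔ span w = ⊤
  have hsup : H ⊔ Submodule.span ℂ {w} = ⊤ := by
    apply Submodule.eq_top_of_finrank_eq
    have hlt : H < H ⊔ Submodule.span ℂ {w} := by
      refine lt_of_le_of_ne le_sup_left fun h => hw ?_
      rw [h]
      exact Submodule.mem_sup_right (Submodule.mem_span_singleton_self w)
    have := Submodule.finrank_lt_finrank_of_lt hlt
    have := Submodule.finrank_le (H ⊔ Submodule.span ℂ {w})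
    omega
  -- polar q v vanishes everywhere
  have hzero : ∀ x : V, QuadraticMap.polar q (v : V) x = 0 := by
    intro x
    have hx : x ∈ H ⊔ Submodule.span ℂ {w} := hsup ▸ Submodule.mem_top
    obtain ⟨h, hh, y, hy, rfl⟩ := Submodule.mem_sup.mp hx
    obtain ⟨c, rfl⟩ := Submodule.mem_span_singleton.mp hy
    rw [QuadraticMap.polar_add_right, QuadraticMap.polar_smul_right,
      hpH _ hvH h hh, hvw, smul_zero, add_zero]
  have : (v : V) = 0 := hnd _ hzero
  exact hvne (Subtype.ext (Subtype.ext this))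
end
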